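/- arXiv:2605.22735 — 3 statements merged into one kernel-verified Lean document; each statement's English description precedes it below -/
import Mathlib

section
/- Let T be a finite-order element of GL_n(ℤ) with n ≤ 6. Then the order of T is at most 30. -/
open Polynomial

lemma dvd_2520_of_totient_le_six {d : ℕ} (hd : d ≠ 0) (h : d.totient ≤ 6) : d ∣ 2520 := by
  rw [← Nat.factorization_le_iff_dvd hd (by norm_num)]
  refine (Finsupp.le_iff _ _).2 fun p hp => ?_
  have hpp : p.Prime := Nat.prime_of_mem_primeFactors (by simpa [Nat.support_factorization] using hp)
  set m := d.factorization p with hm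
  have hm0 : 0 < m := Nat.pos_of_ne_zero (Finsupp.mem_support_iff.1 hp)
  have hdvd : p ^ m ∣ d := Nat.ordProj_dvd d p
  have htot : (p ^ m).totient ∣ d.totient := Nat.totient_dvd_of_dvd hdvd
  have htot6 : (p ^ m).totient ≤ 6 :=
    le_trans (Nat.le_of_dvd (Nat.totient_pos.2 (Nat.pos_of_ne_zero hd)) htot) h
  rw [Nat.totient_prime_pow hpp hm0] at htot6
  have hp2 : 2 ≤ p := hpp.two_le
  have hp7 : p ≤ 7 := by
    have h1 : 1 ≤ p ^ (m - 1) := Nat.one_le_pow _ _ (by omega)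
    have h2 : 1 * (p - 1) ≤ p ^ (m - 1) * (p - 1) := Nat.mul_le_mul_right _ h1
    omega
  rw [← hpp.pow_dvd_iff_le_factorization (by norm_num : (2520:ℕ) ≠ 0)]
  interval_cases p
  · -- p = 2
    have h1 : 2 ^ (m - 1) ≤ 6 := by linarith
    have h2 : m - 1 < 3 := by
      have := lt_of_le_of_lt h1 (by norm_num : (6:ℕ) < 2 ^ 3)
      exact (Nat.pow_lt_pow_iff_right (by norm_num)).1 this
    have hmle : m ≤ 3 := by omega
    exact dvd_trans (pow_dvd_pow 2 hmle) (by norm_num)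
  · -- p = 3
    have h1 : 3 ^ (m - 1) ≤ 3 := by linarith
    have h2 : m - 1 < 2 := by
      have := lt_of_le_of_lt h1 (by norm_num : (3:ℕ) < 3 ^ 2)
      exact (Nat.pow_lt_pow_iff_right (by norm_num)).1 this
    have hmle : m ≤ 2 := by omega
    exact dvd_trans (pow_dvd_pow 3 hmle) (by norm_num)
  · exact absurd hpp (by norm_num)
  · -- p = 5
    have h1 : 5 ^ (m - 1) ≤ 1 := by linarith
    have h2 : m - 1 < 1 := by
      have := lt_of_le_of_lt h1 (by norm_num : (1:ℕ) < 5 ^ 1)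
      exact (Nat.pow_lt_pow_iff_right (by norm_num)).1 this
    have hmle : m ≤ 1 := by omega
    exact dvd_trans (pow_dvd_pow 5 hmle) (by norm_num)
  · exact absurd hpp (by norm_num)
  · -- p = 7
    have h1 : 7 ^ (m - 1) ≤ 1 := by linarith
    have h2 : m - 1 < 1 := by
      have := lt_of_le_of_lt h1 (by norm_num : (1:ℕ) < 7 ^ 1)
      exact (Nat.pow_lt_pow_iff_right (by norm_num)).1 this
    have hmle : m ≤ 1 := by omega
    exact dvd_trans (pow_dvd_pow 7 hmle) (by norm_num)

set_option maxRecDepth 100000 in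
lemma mem_S6_of_totient_le_six {d : ℕ} (hd : d ≠ 0) (h : d.totient ≤ 6) :
    d ∈ ({1,2,3,4,5,6,7,8,9,10,12,14,18} : Finset ℕ) :=
  (by decide : ∀ x ∈ (2520:ℕ).divisors, x.totient ≤ 6 →
      x ∈ ({1,2,3,4,5,6,7,8,9,10,12,14,18} : Finset ℕ)) d
    (Nat.mem_divisors.2 ⟨dvd_2520_of_totient_le_six hd h, by norm_num⟩) h

lemma pow_dvd_finset_lcm {p k : ℕ} (hp : p.Prime) (hk : k ≠ 0) :
    ∀ {D : Finset ℕ}, p ^ k ∣ D.lcm id → ∃ d ∈ D, p ^ k ∣ d := by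
  intro D
  induction D using Finset.induction with
  | empty =>
    intro hdvd
    rw [Finset.lcm_empty] at hdvd
    have h1 : p ^ k = 1 := Nat.dvd_one.1 hdvd
    rw [pow_eq_one_iff, or_iff_left hk] at h1
    exact absurd h1 hp.one_lt.ne'
  | @insert a s ha ih =>
    intro hdvd
    rw [Finset.lcm_insert] at hdvd
    have hdvd' : p ^ k ∣ Nat.lcm a (s.lcm id) := by
      simpa [lcm_eq_nat_lcm] using hdvd
    by_cases ha0 : a = 0
    · exact ⟨a, Finset.mem_insert_self a s, by simp [ha0]⟩
    by_cases hs0 : s.lcm id = 0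
    · have h0 : (0:ℕ) ∈ s := by
        have := (Finset.lcm_eq_zero_iff (f := (id : ℕ → ℕ)) (s := s)).1 hs0
        simpa using this
      exact ⟨0, Finset.mem_insert_of_mem h0, dvd_zero _⟩
    · have hlcm0 : Nat.lcm a (s.lcm id) ≠ 0 := Nat.lcm_ne_zero ha0 hs0
      have hle := (hp.pow_dvd_iff_le_factorization hlcm0).1 hdvd'
      rw [Nat.factorization_lcm ha0 hs0] at hle
      simp only [Finsupp.sup_apply, le_sup_iff] at hle
      rcases hle with h | h
      · exact ⟨a, Finset.mem_insert_self a s, (hp.pow_dvd_iff_le_factorization ha0).2 h⟩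
      · obtain ⟨d, hd, hdp⟩ := ih ((hp.pow_dvd_iff_le_factorization hs0).2 h)
        exact ⟨d, Finset.mem_insert_of_mem hd, hdp⟩

set_option maxRecDepth 100000 in
lemma decide_dvd60 : ∀ x ∈ (2520:ℕ).divisors, ¬(8∣x) → ¬(9∣x) → ¬(7∣x) → x ∣ 60 := by decide

set_option maxRecDepth 100000 in
lemma decide_dvd24 : ∀ x ∈ (2520:ℕ).divisors, ¬(5∣x) → ¬(9∣x) → ¬(7∣x) → x ∣ 24 := by decide

lemma decide_60a : ∀ x ∈ (60:ℕ).divisors, ¬(4∣x) → x ≤ 30 := by decide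
lemma decide_60b : ∀ x ∈ (60:ℕ).divisors, ¬(3∣x) → x ≤ 30 := by decide

lemma finset_lcm_le_30 {D : Finset ℕ}
    (hsub : ∀ d ∈ D, d ∈ ({1,2,3,4,5,6,7,8,9,10,12,14,18} : Finset ℕ))
    (hsum : ∑ d ∈ D, d.totient ≤ 6) : D.lcm id ≤ 30 := by
  set L := D.lcm id with hL
  have hfacts : ∀ d ∈ ({1,2,3,4,5,6,7,8,9,10,12,14,18} : Finset ℕ), 0 < d ∧ d ∣ 2520 := by decide
  have hpos : ∀ d ∈ D, 0 < d := fun d hd => (hfacts d (hsub d hd)).1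
  have hL2520 : L ∣ 2520 := Finset.lcm_dvd (fun d hd => (hfacts d (hsub d hd)).2)
  have hLpos : 0 < L := by
    refine Nat.pos_of_ne_zero fun h0 => ?_
    have := (Finset.lcm_eq_zero_iff (f := (id : ℕ → ℕ)) (s := D)).1 h0
    simp only [id_eq] at this
    obtain ⟨d, hd, hd0⟩ : ∃ d ∈ D, d = 0 := by simpa [eq_comm] using this
    exact absurd (hpos d hd) (by omega)
  have hLdvs : L ∈ (2520:ℕ).divisors := Nat.mem_divisors.2 ⟨hL2520, by norm_num⟩
  have hpair : ∀ d ∈ D, ∀ e ∈ D, d ≠ e → d.totient + e.totient ≤ 6 := by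
    intro d hd e he hne
    have hss : ({d, e} : Finset ℕ) ⊆ D := by
      intro x hx; simp only [Finset.mem_insert, Finset.mem_singleton] at hx
      rcases hx with rfl | rfl <;> assumption
    calc d.totient + e.totient = ∑ x ∈ ({d,e} : Finset ℕ), x.totient :=
          (Finset.sum_pair hne).symm
      _ ≤ ∑ x ∈ D, x.totient := Finset.sum_le_sum_of_subset hss
      _ ≤ 6 := hsum
  have htriple : ∀ d ∈ D, ∀ e ∈ D, ∀ f ∈ D, d ≠ e → d ≠ f → e ≠ f →
      d.totient + e.totient + f.totient ≤ 6 := by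
    intro d hd e he f hf hde hdf hef
    have hss : ({d, e, f} : Finset ℕ) ⊆ D := by
      intro x hx
      simp only [Finset.mem_insert, Finset.mem_singleton] at hx
      rcases hx with rfl | rfl | rfl <;> assumption
    have hsumeq : ∑ x ∈ ({d,e,f} : Finset ℕ), x.totient
        = d.totient + (e.totient + f.totient) := by
      rw [Finset.sum_insert (by simp [hde, hdf]), Finset.sum_pair hef]
    calc d.totient + e.totient + f.totient
        = ∑ x ∈ ({d,e,f} : Finset ℕ), x.totient := by rw [hsumeq]; ring
      _ ≤ ∑ x ∈ D, x.totient := Finset.sum_le_sum_of_subset hss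
      _ ≤ 6 := hsum
  by_cases h7 : 7 ∣ L
  · obtain ⟨d, hdD, hd7⟩ := pow_dvd_finset_lcm (p := 7) (k := 1) (by norm_num) one_ne_zero
      (by simpa using h7)
    rw [pow_one] at hd7
    have hdS := hsub d hdD
    have hd' : d = 7 ∨ d = 14 := by fin_cases hdS <;> omega
    have hsingle : ∀ e ∈ D, e = d := by
      intro e he
      by_contra hne
      have h1 := hpair e he d hdD hne
      have h2 : d.totient = 6 := by rcases hd' with rfl | rfl <;> decide
      have h3 : 0 < e.totient := Nat.totient_pos.2 (hpos e he)
      omega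
    have hLd : L ∣ d := Finset.lcm_dvd fun e he => by rw [id, hsingle e he]
    have := Nat.le_of_dvd (by rcases hd' with rfl | rfl <;> norm_num) hLd
    rcases hd' with rfl | rfl <;> omega
  by_cases h9 : 9 ∣ L
  · obtain ⟨d, hdD, hd9⟩ := pow_dvd_finset_lcm (p := 3) (k := 2) (by norm_num) (by norm_num)
      (by simpa using h9)
    have hd9' : 9 ∣ d := by simpa using hd9
    have hdS := hsub d hdD
    have hd' : d = 9 ∨ d = 18 := by fin_cases hdS <;> omega
    have hsingle : ∀ e ∈ D, e = d := by
      intro e he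
      by_contra hne
      have h1 := hpair e he d hdD hne
      have h2 : d.totient = 6 := by rcases hd' with rfl | rfl <;> decide
      have h3 : 0 < e.totient := Nat.totient_pos.2 (hpos e he)
      omega
    have hLd : L ∣ d := Finset.lcm_dvd fun e he => by rw [id, hsingle e he]
    have := Nat.le_of_dvd (by rcases hd' with rfl | rfl <;> norm_num) hLd
    rcases hd' with rfl | rfl <;> omega
  by_cases h5 : 5 ∣ L
  · obtain ⟨d, hdD, hd5⟩ := pow_dvd_finset_lcm (p := 5) (k := 1) (by norm_num) one_ne_zero
      (by simpa using h5)
    rw [pow_one] at hd5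
    have hdS := hsub d hdD
    have hd' : d = 5 ∨ d = 10 := by fin_cases hdS <;> omega
    have hdtot : d.totient = 4 := by rcases hd' with rfl | rfl <;> decide
    have h8 : ¬ (8 ∣ L) := by
      intro h8
      obtain ⟨e, heD, he8⟩ := pow_dvd_finset_lcm (p := 2) (k := 3) (by norm_num) (by norm_num)
        (by simpa using h8)
      have he8' : 8 ∣ e := by simpa using he8
      have heS := hsub e heD
      have he' : e = 8 := by fin_cases heS <;> omega
      have hne : d ≠ e := by rcases hd' with rfl | rfl <;> omega
      have := hpair d hdD e heD hne
      rw [hdtot, he'] at this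
      revert this; decide
    have hL60 : L ∣ 60 := decide_dvd60 L hLdvs h8 h9 h7
    by_cases h4 : 4 ∣ L
    · by_cases h3 : 3 ∣ L
      · exfalso
        obtain ⟨e, heD, he4⟩ := pow_dvd_finset_lcm (p := 2) (k := 2) (by norm_num) (by norm_num)
          (by simpa using h4)
        have he4' : 4 ∣ e := by simpa using he4
        have heS := hsub e heD
        have he' : e = 4 ∨ e = 8 ∨ e = 12 := by fin_cases heS <;> omega
        have hde : d ≠ e := by rcases hd' with rfl | rfl <;> rcases he' with rfl | rfl | rfl <;> omega
        have hbud := hpair d hdD e heD hde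
        have he4only : e = 4 := by
          rcases he' with rfl | rfl | rfl
          · rfl
          all_goals (rw [hdtot] at hbud; revert hbud; decide)
        subst he4only
        obtain ⟨f, hfD, hf3⟩ := pow_dvd_finset_lcm (p := 3) (k := 1) (by norm_num) one_ne_zero
          (by simpa using h3)
        rw [pow_one] at hf3
        have hfS := hsub f hfD
        have hf' : f = 3 ∨ f = 6 ∨ f = 9 ∨ f = 12 ∨ f = 18 := by fin_cases hfS <;> omega
        have hdf : d ≠ f := by
          rcases hd' with rfl | rfl <;> rcases hf' with rfl | rfl | rfl | rfl | rfl <;> omega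
        have hbud2 := hpair d hdD f hfD hdf
        have hf36 : f = 3 ∨ f = 6 := by
          rcases hf' with rfl | rfl | rfl | rfl | rfl
          · left; rfl
          · right; rfl
          all_goals (rw [hdtot] at hbud2; revert hbud2; decide)
        have hef : (4:ℕ) ≠ f := by rcases hf36 with rfl | rfl <;> omega
        have hbud3 := htriple d hdD 4 heD f hfD hde (by omega) hef
        rw [hdtot] at hbud3
        have hftot : f.totient = 2 := by rcases hf36 with rfl | rfl <;> decide
        have h4tot : (4:ℕ).totient = 2 := by decide
        omega
      · exact le_trans (decide_60b L (Nat.mem_divisors.2 ⟨hL60, by norm_num⟩) h3) (by norm_num)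
    · exact le_trans (decide_60a L (Nat.mem_divisors.2 ⟨hL60, by norm_num⟩) h4) (by norm_num)
  · have hL24 : L ∣ 24 := decide_dvd24 L hLdvs h5 h9 h7
    exact le_trans (Nat.le_of_dvd (by norm_num) hL24) (by norm_num)

/-- A finite-order element of `GL_n(ℤ)` with `n ≤ 6` has order at most `30`. -/
theorem finite_order_GL6_int_order_le_30
    (n : ℕ) (hn : n ≤ 6) (T : Matrix.GeneralLinearGroup (Fin n) ℤ)
    (hT : IsOfFinOrder T) :
    orderOf T ≤ 30 := by
  classical
  have hk0 : 0 < orderOf T := hT.orderOf_pos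
  set k := orderOf T with hk
  let f : Matrix.GeneralLinearGroup (Fin n) ℤ →* Matrix (Fin n) (Fin n) ℚ :=
    ((Int.castRingHom ℚ).mapMatrix.toMonoidHom).comp (Units.coeHom _)
  have hfinj : Function.Injective f := by
    intro x y hxy
    have h2 : ((x : Matrix (Fin n) (Fin n) ℤ)).map (Int.cast : ℤ → ℚ)
        = ((y : Matrix (Fin n) (Fin n) ℤ)).map (Int.cast : ℤ → ℚ) := hxy
    exact Units.ext (Matrix.map_injective Int.cast_injective h2)
  set A := f T with hA
  have hordA : orderOf A = k := orderOf_injective f hfinj T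
  have hApow : A ^ k = 1 := by rw [← hordA]; exact pow_orderOf_eq_one A
  have haev : (Polynomial.aeval A) (X ^ k - 1 : ℚ[X]) = 0 := by
    simp [hApow]
  have hmin : minpoly ℚ A ∣ X ^ k - 1 := minpoly.dvd ℚ A haev
  set P := Matrix.charpoly A with hP
  have hPmonic : P.Monic := Matrix.charpoly_monic A
  have hminP : minpoly ℚ A ∣ P := A.minpoly_dvd_charpoly
  set D := (Nat.divisors k).filter (fun d => Polynomial.cyclotomic d ℚ ∣ P) with hD
  have hDpos : ∀ d ∈ D, 0 < d := fun d hd =>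
    Nat.pos_of_mem_divisors (Finset.mem_filter.1 hd).1
  -- minpoly ∣ ∏_{d ∈ D} Φ_d
  have hXk : (∏ d ∈ k.divisors, cyclotomic d ℚ) = X ^ k - 1 :=
    prod_cyclotomic_eq_X_pow_sub_one hk0 ℚ
  have hfactor : (∏ d ∈ D, cyclotomic d ℚ) *
      (∏ d ∈ k.divisors.filter (fun d => ¬ cyclotomic d ℚ ∣ P), cyclotomic d ℚ)
      = X ^ k - 1 := by
    rw [← hXk, hD]
    exact Finset.prod_filter_mul_prod_filter_not k.divisors _ _
  have hcop : IsCoprime (minpoly ℚ A)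
      (∏ d ∈ k.divisors.filter (fun d => ¬ cyclotomic d ℚ ∣ P), cyclotomic d ℚ) := by
    apply IsCoprime.prod_right
    intro d hd
    obtain ⟨hdk, hnd⟩ := Finset.mem_filter.1 hd
    have hirr : Irreducible (cyclotomic d ℚ) :=
      cyclotomic.irreducible_rat (Nat.pos_of_mem_divisors hdk)
    exact ((hirr.coprime_iff_not_dvd).2 fun hdvd => hnd (hdvd.trans hminP)).symm
  have hmin2 : minpoly ℚ A ∣ ∏ d ∈ D, cyclotomic d ℚ := by
    refine hcop.dvd_of_dvd_mul_right ?_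
    rw [hfactor]; exact hmin
  -- A ^ lcm D = 1
  set L := D.lcm id with hL
  have hLne : L ≠ 0 := by
    intro h0
    have := (Finset.lcm_eq_zero_iff (f := (id : ℕ → ℕ)) (s := D)).1 h0
    simp only [id_eq] at this
    obtain ⟨d, hd, hd0⟩ : ∃ d ∈ D, d = 0 := by simpa [eq_comm] using this
    exact absurd (hDpos d hd) (by omega)
  have hprodL : (∏ d ∈ D, cyclotomic d ℚ) ∣ X ^ L - 1 := by
    rw [← prod_cyclotomic_eq_X_pow_sub_one (Nat.pos_of_ne_zero hLne) ℚ]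
    apply Finset.prod_dvd_prod_of_subset
    intro d hd
    exact Nat.mem_divisors.2 ⟨Finset.dvd_lcm hd, hLne⟩
  have hALpow : A ^ L = 1 := by
    obtain ⟨q, hq⟩ := hmin2.trans hprodL
    have h2 : (Polynomial.aeval A) (X ^ L - 1 : ℚ[X]) = 0 := by
      rw [hq, map_mul, minpoly.aeval, zero_mul]
    have h3 : A ^ L - 1 = 0 := by simpa using h2
    rw [sub_eq_zero] at h3; exact h3
  have hkL : k ∣ L := by rw [← hordA]; exact orderOf_dvd_of_pow_eq_one hALpow
  -- sum of totients ≤ n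
  have hprodP : (∏ d ∈ D, cyclotomic d ℚ) ∣ P := by
    apply Finset.prod_dvd_of_coprime
    · intro d hd e he hne
      have hd' : d ∈ D := hd
      have he' : e ∈ D := he
      have hirr_d : Irreducible (cyclotomic d ℚ) := cyclotomic.irreducible_rat (hDpos d hd')
      have hirr_e : Irreducible (cyclotomic e ℚ) := cyclotomic.irreducible_rat (hDpos e he')
      refine (hirr_d.coprime_iff_not_dvd).2 fun hdvd => hne ?_
      have hassoc := hirr_d.associated_of_dvd hirr_e hdvd
      have heq := eq_of_monic_of_associated (cyclotomic.monic d ℚ) (cyclotomic.monic e ℚ) hassoc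
      exact cyclotomic_injective heq
    · intro d hd
      exact (Finset.mem_filter.1 hd).2
  have hdeg : ∑ d ∈ D, d.totient ≤ n := by
    have h1 : (∏ d ∈ D, cyclotomic d ℚ).natDegree ≤ P.natDegree :=
      natDegree_le_of_dvd hprodP hPmonic.ne_zero
    rw [hP, Matrix.charpoly_natDegree_eq_dim, Fintype.card_fin] at h1
    rw [natDegree_prod _ _ (fun d _ => cyclotomic_ne_zero d ℚ)] at h1
    simpa [natDegree_cyclotomic] using h1
  -- conclude
  have hsub : ∀ d ∈ D, d ∈ ({1,2,3,4,5,6,7,8,9,10,12,14,18} : Finset ℕ) := by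
    intro d hd
    refine mem_S6_of_totient_le_six (hDpos d hd).ne' ?_
    calc d.totient ≤ ∑ e ∈ D, e.totient :=
          Finset.single_le_sum (f := fun e => e.totient) (fun i _ => Nat.zero_le _) hd
      _ ≤ n := hdeg
      _ ≤ 6 := hn
  have hL30 : L ≤ 30 := finset_lcm_le_30 hsub (hdeg.trans hn)
  exact le_trans (Nat.le_of_dvd (Nat.pos_of_ne_zero hLne) hkL) hL30
end

section
/- Let d_1, ..., d_k be positive integers such that the sum of the Euler totients φ(d_1) + ... + φ(d_k) is at most 6. Then lcm(d_1, ..., d_k) ≤ 30. -/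
open Finset

private lemma totient_sq_bound (n : ℕ) :
    n ≤ 2 * Nat.totient n ^ 2 ∧ (¬ 2 ∣ n → n ≤ Nat.totient n ^ 2) := by
  induction n using Nat.recOnPosPrimePosCoprime with
  | prime_pow p k hp hk =>
      have hp' : p.Prime := hp
      rw [Nat.totient_prime_pow hp' hk]
      rcases eq_or_ne p 2 with rfl | hodd
      · constructor
        · have h1 : 2 ^ k ≤ 2 ^ (k - 1) * 2 ^ (k - 1) * 2 := by
            have : k ≤ (k - 1) + (k - 1) + 1 := by omega
            calc 2 ^ k ≤ 2 ^ ((k - 1) + (k - 1) + 1) := Nat.pow_le_pow_right (by norm_num) this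
            _ = 2 ^ (k - 1) * 2 ^ (k - 1) * 2 := by ring
          calc 2 ^ k ≤ 2 ^ (k - 1) * 2 ^ (k - 1) * 2 := h1
          _ = 2 * (2 ^ (k - 1) * (2 - 1)) ^ 2 := by ring_nf
        · intro h; exact absurd (dvd_pow_self 2 hk.ne') h
      · have hp3 : 3 ≤ p := by
          rcases hp'.two_le.lt_or_eq with h | h
          · omega
          · exact absurd h.symm hodd
        have hkey : p ^ k ≤ (p ^ (k - 1) * (p - 1)) ^ 2 := by
          have h1 : p ^ k = p ^ (k - 1) * p := by
            rw [← pow_succ]; congr 1; omega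
          have h2 : (p - 1) ^ 2 ≥ p := by nlinarith [Nat.sub_add_cancel (by omega : 1 ≤ p)]
          have h3 : p ^ (k - 1) ≥ 1 := Nat.one_le_pow _ _ hp'.pos
          calc p ^ k = p ^ (k - 1) * p := h1
          _ ≤ (p ^ (k - 1) * p ^ (k - 1)) * (p - 1) ^ 2 := by
              calc p ^ (k - 1) * p ≤ (p ^ (k - 1) * p ^ (k - 1)) * p :=
                Nat.mul_le_mul (Nat.le_mul_of_pos_left _ h3) (le_refl p)
              _ ≤ (p ^ (k - 1) * p ^ (k - 1)) * (p - 1) ^ 2 := Nat.mul_le_mul_left _ h2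
          _ = (p ^ (k - 1) * (p - 1)) ^ 2 := by ring
        exact ⟨hkey.trans (by omega), fun _ => hkey⟩
  | zero => simp
  | one => simp
  | coprime a b ha hb hab iha ihb =>
      rw [Nat.totient_mul hab]
      obtain ⟨ha1, ha2⟩ := iha
      obtain ⟨hb1, hb2⟩ := ihb
      have hnot : ¬ (2 ∣ a ∧ 2 ∣ b) := by
        rintro ⟨h2a, h2b⟩
        have := Nat.dvd_gcd h2a h2b
        rw [Nat.Coprime.gcd_eq_one hab] at this
        omega
      have key : a * b ≤ 2 * (a.totient * b.totient) ^ 2 ∧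
          (¬ 2 ∣ a * b → a * b ≤ (a.totient * b.totient) ^ 2) := by
        by_cases h2a : 2 ∣ a
        · have h2b : ¬ 2 ∣ b := fun h => hnot ⟨h2a, h⟩
          have hb' := hb2 h2b
          refine ⟨?_, fun hc => absurd (h2a.mul_right b) hc⟩
          calc a * b ≤ (2 * a.totient ^ 2) * (b.totient ^ 2) := Nat.mul_le_mul ha1 hb'
          _ = 2 * (a.totient * b.totient) ^ 2 := by ring
        · have ha' := ha2 h2a
          by_cases h2b : 2 ∣ b
          · refine ⟨?_, fun hc => absurd (h2b.mul_left a) hc⟩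
            calc a * b ≤ (a.totient ^ 2) * (2 * b.totient ^ 2) := Nat.mul_le_mul ha' hb1
            _ = 2 * (a.totient * b.totient) ^ 2 := by ring
          · have hb' := hb2 h2b
            have : a * b ≤ (a.totient * b.totient) ^ 2 := by
              calc a * b ≤ a.totient ^ 2 * b.totient ^ 2 := Nat.mul_le_mul ha' hb'
              _ = (a.totient * b.totient) ^ 2 := by ring
            exact ⟨this.trans (by omega), fun _ => this⟩
      exact key

private lemma le_72_of_totient_le_six {n : ℕ} (h : Nat.totient n ≤ 6) : n ≤ 72 := by
  have := (totient_sq_bound n).1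
  nlinarith

private def Sfull : Finset ℕ := {1,2,3,4,5,6,7,8,9,10,12,14,18}
private def Ssmall : Finset ℕ := {1,2,3,4,6}
private def Sbig : Finset ℕ := {5,7,8,9,10,12,14,18}

private lemma mem_Sfull {n : ℕ} (h0 : 0 < n) (h6 : Nat.totient n ≤ 6) : n ∈ Sfull := by
  have h72 : n ≤ 72 := le_72_of_totient_le_six h6
  have : ∀ m ∈ Finset.range 73, 0 < m → Nat.totient m ≤ 6 → m ∈ Sfull := by
    set_option maxRecDepth 10000 in decide
  exact this n (Finset.mem_range.mpr (by omega)) h0 h6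

private lemma mem_Sbig {t : ℕ} (ht : t ∈ Sfull) (h : t ∉ Ssmall) : t ∈ Sbig := by
  have : ∀ t ∈ Sfull, t ∉ Ssmall → t ∈ Sbig := by decide
  exact this t ht h

private lemma mem_Ssmall {r : ℕ} (hr : r ∈ Sfull) (h : Nat.totient r ≤ 2) : r ∈ Ssmall := by
  have : ∀ r ∈ Sfull, Nat.totient r ≤ 2 → r ∈ Ssmall := by decide
  exact this r hr h

private lemma totient_big {t : ℕ} (ht : t ∈ Sbig) : 4 ≤ Nat.totient t := by
  have : ∀ t ∈ Sbig, 4 ≤ Nat.totient t := by decide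
  exact this t ht

set_option maxRecDepth 4000 in
private lemma key_big : ∀ t ∈ Sbig, ∀ R ∈ Ssmall.powerset,
    Nat.totient t + (∑ r ∈ R, Nat.totient r) ≤ 6 → (insert t R).lcm id ≤ 30 := by decide

private lemma key_small : ∀ T ∈ Ssmall.powerset, T.lcm id ≤ 30 := by decide

private lemma key_finite (T : Finset ℕ) (hsub : T ⊆ Sfull)
    (hsum : (∑ t ∈ T, Nat.totient t) ≤ 6) : T.lcm id ≤ 30 := by
  classical
  by_cases hc : ∀ t ∈ T, t ∈ Ssmall
  · exact key_small T (Finset.mem_powerset.mpr hc)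
  · push_neg at hc
    obtain ⟨t, ht, htn⟩ := hc
    have htbig : t ∈ Sbig := mem_Sbig (hsub ht) htn
    have ht4 : 4 ≤ Nat.totient t := totient_big htbig
    have hsplit : Nat.totient t + ∑ r ∈ T.erase t, Nat.totient r = ∑ r ∈ T, Nat.totient r :=
      Finset.add_sum_erase _ _ ht
    have herase_sum : ∑ r ∈ T.erase t, Nat.totient r ≤ 2 := by omega
    have herase : T.erase t ⊆ Ssmall := by
      intro r hr
      refine mem_Ssmall (hsub (Finset.mem_of_mem_erase hr)) ?_
      refine le_trans ?_ herase_sum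
      simpa using Finset.single_le_sum (f := fun r => Nat.totient r)
        (fun j _ => Nat.zero_le _) hr
    have := key_big t htbig (T.erase t) (Finset.mem_powerset.mpr herase) (by omega)
    rwa [Finset.insert_erase ht] at this

/-- If positive integers `d 1, …, d k` satisfy `∑ φ(d i) ≤ 6`, then
their least common multiple is at most `30`. -/
theorem lcm_le_30_of_totient_sum_le_six
    (k : ℕ) (d : Fin k → ℕ) (hd : ∀ i, 0 < d i)
    (h : ∑ i, Nat.totient (d i) ≤ 6) :
    Finset.univ.lcm d ≤ 30 := by
  classical
  set T : Finset ℕ := Finset.univ.image d with hT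
  have hphi : ∀ i, Nat.totient (d i) ≤ 6 := by
    intro i
    exact le_trans (Finset.single_le_sum (f := fun i => Nat.totient (d i))
      (fun i _ => Nat.zero_le _) (Finset.mem_univ i)) h
  have hTsub : T ⊆ Sfull := by
    intro t ht
    obtain ⟨i, _, rfl⟩ := Finset.mem_image.mp ht
    exact mem_Sfull (hd i) (hphi i)
  have hsum : (∑ t ∈ T, Nat.totient t) ≤ 6 := by
    refine le_trans ?_ h
    have expand : ∑ i, Nat.totient (d i) =
        ∑ t ∈ T, ∑ i ∈ Finset.univ.filter (fun i => d i = t), Nat.totient (d i) :=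
      (Finset.sum_fiberwise_of_maps_to
        (fun i _ => Finset.mem_image_of_mem d (Finset.mem_univ i)) _).symm
    rw [expand]
    refine Finset.sum_le_sum ?_
    intro t ht
    obtain ⟨i, -, rfl⟩ := Finset.mem_image.mp ht
    exact Finset.single_le_sum (f := fun j => Nat.totient (d j))
      (fun j _ => Nat.zero_le _)
      (Finset.mem_filter.mpr ⟨Finset.mem_univ i, rfl⟩)
  have hlcm : Finset.univ.lcm d = T.lcm id := Finset.lcm_eq_lcm_image
  rw [hlcm]
  exact key_finite T hTsub hsum
end

section
/- Let Λ be a free abelian group of finite rank ρ, let V be a complex vector space, and let ι : Λ → V be a group homomorphism whose image spans V over ℂ. If T : V → V is a ℂ-linear automorphism of finite order with T(ι(Λ)) = ι(Λ) and ι is injective, then the order of T divides the order of the induced automorphism of Λ, which is the order of a finite-order element of GL_ρ(ℤ); in particular if ρ ≤ 6 then T has order at most 30. -/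
set_option maxRecDepth 8000

open Polynomial
open scoped Classical

/-- The positive naturals with totient at most `6`. -/
def Dlist : Finset ℕ := {1,2,3,4,5,6,7,8,9,10,12,14,18}

/-- Totient values on `Dlist`. -/
def w : ℕ → ℕ
  | 1 => 1 | 2 => 1 | 3 => 2 | 4 => 2 | 5 => 4 | 6 => 2 | 7 => 6
  | 8 => 4 | 9 => 6 | 10 => 4 | 12 => 4 | 14 => 6 | 18 => 6 | _ => 0

lemma hw : ∀ d ∈ Dlist, d.totient = w d := by decide

/-- checker: every subset of `l` whose `w`-sum is `≤ b` has `Nat.lcm a (lcm of subset) ≤ 30`. -/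
def chk : List ℕ → ℕ → ℕ → Bool
  | [], _, a => decide (a ≤ 30)
  | d :: l, b, a => chk l b a && (decide (b < w d) || chk l (b - w d) (Nat.lcm a d))

lemma chk_sound : ∀ (l : List ℕ) (b a : ℕ), chk l b a = true →
    ∀ S : Finset ℕ, (∀ x ∈ S, x ∈ l) → (∑ d ∈ S, w d) ≤ b → Nat.lcm a (S.lcm id) ≤ 30 := by
  intro l
  induction l with
  | nil =>
    intro b a h S hS hsum
    have hSe : S = ∅ := Finset.eq_empty_of_forall_notMem fun x hx => by simpa using hS x hx
    subst hSe
    simp only [chk, decide_eq_true_eq] at h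
    simpa using h
  | cons d l ih =>
    intro b a h S hS hsum
    simp only [chk, Bool.and_eq_true, Bool.or_eq_true, decide_eq_true_eq] at h
    obtain ⟨h1, h2⟩ := h
    by_cases hdS : d ∈ S
    · have hwd : w d ≤ b :=
        le_trans (Finset.single_le_sum (f := w) (fun i _ => Nat.zero_le _) hdS) hsum
      rcases h2 with hlt | hchk
      · omega
      · have hS' : ∀ x ∈ S.erase d, x ∈ l := by
          intro x hx
          have hxd := Finset.ne_of_mem_erase hx
          have := hS x (Finset.mem_of_mem_erase hx)
          simpa [hxd] using this
        have hsum' : (∑ x ∈ S.erase d, w x) ≤ b - w d := by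
          have := Finset.add_sum_erase S w hdS
          omega
        have hres := ih (b - w d) (Nat.lcm a d) hchk (S.erase d) hS' hsum'
        have hins : S.lcm id = lcm d ((S.erase d).lcm id) := by
          conv_lhs => rw [← Finset.insert_erase hdS]
          rw [Finset.lcm_insert]
          rfl
        rw [hins]
        have hassoc : Nat.lcm a (lcm d ((S.erase d).lcm id))
            = Nat.lcm (Nat.lcm a d) ((S.erase d).lcm id) := by
          show lcm a (lcm d ((S.erase d).lcm id)) = lcm (lcm a d) ((S.erase d).lcm id)
          rw [lcm_assoc]
        rw [hassoc]
        exact hres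
    · exact ih b a h1 S (fun x hx => by
        have := hS x hx
        have hxd : x ≠ d := fun hh => hdS (hh ▸ hx)
        simpa [hxd] using this) hsum

lemma chk_true : chk [1,2,3,4,5,6,7,8,9,10,12,14,18] 6 1 = true := by decide

lemma dlist_mem_list : ∀ d ∈ Dlist, d ∈ [1,2,3,4,5,6,7,8,9,10,12,14,18] := by decide

lemma finset_lcm_le (S : Finset ℕ) (hsub : ∀ d ∈ S, d ∈ Dlist)
    (hsum : ∑ d ∈ S, d.totient ≤ 6) : S.lcm id ≤ 30 := by
  have hsum' : (∑ d ∈ S, w d) ≤ 6 :=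
    le_trans (le_of_eq (Finset.sum_congr rfl fun d hd => (hw d (hsub d hd)).symm)) hsum
  have := chk_sound _ 6 1 chk_true S (fun x hx => dlist_mem_list x (hsub x hx)) hsum'
  simpa [Nat.lcm] using this

lemma totient_pp_le {d p : ℕ} (hd : d ≠ 0) (h : d.totient ≤ 6) (hp : p.Prime)
    (hv : d.factorization p ≠ 0) :
    p ^ (d.factorization p - 1) * (p - 1) ≤ 6 := by
  have hdvd : p ^ d.factorization p ∣ d := Nat.ordProj_dvd d p
  have h1 : (p ^ d.factorization p).totient ∣ d.totient := Nat.totient_dvd_of_dvd hdvd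
  have h2 : (p ^ d.factorization p).totient ≤ 6 :=
    le_trans (Nat.le_of_dvd (Nat.totient_pos.2 (Nat.pos_of_ne_zero hd)) h1) h
  rwa [Nat.totient_prime_pow hp (Nat.pos_of_ne_zero hv)] at h2

lemma mem_Dlist_of_totient_le {d : ℕ} (hd : d ≠ 0) (h : d.totient ≤ 6) : d ∈ Dlist := by
  have hsupp : d.factorization.support ⊆ ({2,3,5,7} : Finset ℕ) := by
    intro p hp
    have hpp : p.Prime := Nat.prime_of_mem_primeFactors (by rwa [Nat.support_factorization] at hp)
    have hv : d.factorization p ≠ 0 := Finsupp.mem_support_iff.1 hp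
    have hle := totient_pp_le hd h hpp hv
    have hple : p - 1 ≤ 6 := le_trans (Nat.le_mul_of_pos_left _ (pow_pos hpp.pos _)) hle
    have : p ≤ 7 := by omega
    interval_cases p <;> simp_all <;> exact absurd hpp (by decide)
  set a := d.factorization 2 with ha
  set b := d.factorization 3 with hb
  set c := d.factorization 5 with hc
  set e := d.factorization 7 with he
  have hA : a ≤ 3 := by
    by_contra hA
    have h2 := totient_pp_le hd h (by norm_num : Nat.Prime 2) (by omega)
    rw [← ha] at h2
    have h8 : (2:ℕ)^3 ≤ 2 ^ (a-1) := Nat.pow_le_pow_right (by norm_num) (by omega)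
    simp at h2
    omega
  have hB : b ≤ 2 := by
    by_contra hB
    have h2 := totient_pp_le hd h (by norm_num : Nat.Prime 3) (by omega)
    rw [← hb] at h2
    have h9 : (3:ℕ)^2 ≤ 3 ^ (b-1) := Nat.pow_le_pow_right (by norm_num) (by omega)
    omega
  have hC : c ≤ 1 := by
    by_contra hC
    have h2 := totient_pp_le hd h (by norm_num : Nat.Prime 5) (by omega)
    rw [← hc] at h2
    have h5 : (5:ℕ)^1 ≤ 5 ^ (c-1) := Nat.pow_le_pow_right (by norm_num) (by omega)
    omega
  have hE : e ≤ 1 := by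
    by_contra hE
    have h2 := totient_pp_le hd h (by norm_num : Nat.Prime 7) (by omega)
    rw [← he] at h2
    have h7 : (7:ℕ)^1 ≤ 7 ^ (e-1) := Nat.pow_le_pow_right (by norm_num) (by omega)
    omega
  have hprod : d = 2 ^ a * (3 ^ b * (5 ^ c * 7 ^ e)) := by
    conv_lhs => rw [← Nat.factorization_prod_pow_eq_self hd]
    rw [Finsupp.prod]
    rw [Finset.prod_subset hsupp (by
      intro x _ hx
      rw [Finsupp.notMem_support_iff.1 hx, pow_zero])]
    simp [Finset.prod_insert, ha, hb, hc, he]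
  clear_value a b c e
  clear ha hb hc he hsupp hd
  interval_cases a <;> interval_cases b <;> interval_cases c <;> interval_cases e <;>
    simp only [pow_zero, pow_one, one_mul, mul_one] at hprod <;> subst hprod <;>
    revert h <;> decide

lemma matrix_order_le_30 {ρ : ℕ} (hρ : ρ ≤ 6) (A : Matrix (Fin ρ) (Fin ρ) ℚ)
    (hA : IsOfFinOrder A) : orderOf A ≤ 30 := by
  set n := orderOf A with hn
  have hn0 : 0 < n := hA.orderOf_pos
  have hAn : A ^ n = 1 := pow_orderOf_eq_one A
  set μ := minpoly ℚ A with hμ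
  have haev : (aeval A) ((X : ℚ[X]) ^ n - 1) = 0 := by
    simp [hAn]
  have hμdvd : μ ∣ (X : ℚ[X]) ^ n - 1 := minpoly.dvd _ _ haev
  have hint : IsIntegral ℚ A := Matrix.isIntegral A
  have hμ0 : μ ≠ 0 := minpoly.ne_zero hint
  have hμdeg : μ.natDegree ≤ 6 := by
    have h1 : μ ∣ A.charpoly := A.minpoly_dvd_charpoly
    have h2 : A.charpoly.natDegree = ρ := by
      rw [A.charpoly_natDegree_eq_dim, Fintype.card_fin]
    exact le_trans (le_trans (Polynomial.natDegree_le_of_dvd h1 (A.charpoly_monic.ne_zero)) h2.le) hρ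
  set S : Finset ℕ := n.divisors.filter (fun d => cyclotomic d ℚ ∣ μ) with hS
  have hSpos : ∀ d ∈ S, d ≠ 0 := fun d hd =>
    (Nat.pos_of_mem_divisors (Finset.mem_filter.1 hd).1).ne'
  have hpair : (S : Set ℕ).Pairwise (Function.onFun IsCoprime fun d => cyclotomic d ℚ) :=
    fun x _ y _ hxy => cyclotomic.isCoprime_rat hxy
  have hproddvd : (∏ d ∈ S, cyclotomic d ℚ) ∣ μ :=
    Finset.prod_dvd_of_coprime hpair (fun d hd => (Finset.mem_filter.1 hd).2)
  have hsum : ∑ d ∈ S, d.totient ≤ 6 := by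
    have h1 := Polynomial.natDegree_le_of_dvd hproddvd hμ0
    rw [Polynomial.natDegree_prod _ _ (fun d hd => cyclotomic_ne_zero d ℚ)] at h1
    simp only [natDegree_cyclotomic] at h1
    omega
  have hsplit : (X : ℚ[X]) ^ n - 1 =
      (∏ d ∈ S, cyclotomic d ℚ) *
        ∏ d ∈ n.divisors.filter (fun d => ¬ cyclotomic d ℚ ∣ μ), cyclotomic d ℚ := by
    rw [hS, Finset.prod_filter_mul_prod_filter_not, prod_cyclotomic_eq_X_pow_sub_one hn0]
  have hcop : IsCoprime μ
      (∏ d ∈ n.divisors.filter (fun d => ¬ cyclotomic d ℚ ∣ μ), cyclotomic d ℚ) := by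
    apply IsCoprime.prod_right
    intro d hd
    obtain ⟨hd1, hd2⟩ := Finset.mem_filter.1 hd
    exact (((cyclotomic.irreducible_rat
      (Nat.pos_of_mem_divisors hd1)).coprime_iff_not_dvd).2 hd2).symm
  have hμdvdS : μ ∣ ∏ d ∈ S, cyclotomic d ℚ :=
    hcop.dvd_of_dvd_mul_right (hsplit ▸ hμdvd)
  set L := S.lcm id with hL
  have hL0 : L ≠ 0 := by
    intro h0
    rw [hL, Finset.lcm_eq_zero_iff] at h0
    obtain ⟨d, hd, hd0⟩ := h0
    exact hSpos d hd (by simpa using hd0)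
  have hdvdL : μ ∣ (X : ℚ[X]) ^ L - 1 := by
    refine hμdvdS.trans ?_
    rw [← prod_cyclotomic_eq_X_pow_sub_one (Nat.pos_of_ne_zero hL0)]
    apply Finset.prod_dvd_prod_of_subset
    intro d hd
    exact Nat.mem_divisors.2 ⟨Finset.dvd_lcm hd, hL0⟩
  have hAL : A ^ L = 1 := by
    obtain ⟨q, hq⟩ := hdvdL
    have h0 : (aeval A) ((X : ℚ[X]) ^ L - 1) = 0 := by
      rw [hq, map_mul, minpoly.aeval, zero_mul]
    have h1 : A ^ L - 1 = 0 := by simpa using h0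
    linear_combination (norm := abel) h1
  have hnL : n ∣ L := orderOf_dvd_of_pow_eq_one hAL
  have hle : L ≤ 30 := finset_lcm_le S
    (fun d hd => mem_Dlist_of_totient_le (hSpos d hd)
      (le_trans (Finset.single_le_sum (f := Nat.totient) (fun i _ => Nat.zero_le _) hd) hsum))
    hsum
  exact le_trans (Nat.le_of_dvd (Nat.pos_of_ne_zero hL0) hnL) hle

/-- Let `Λ` be a free abelian group of finite rank `ρ`, `V` a complex vector
space, and `ι : Λ → V` an injective group homomorphism whose image spans `V` over `ℂ`.  If
`T : V ≃ V` is a `ℂ`-linear automorphism of finite order with `T (ι Λ) = ι Λ`, then the order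
of `T` divides the order of any induced automorphism of `Λ` (a finite-order element of
`GL_ρ(ℤ)`); in particular, if `ρ ≤ 6` then `T` has order at most `30`. -/
theorem order_le_30_of_preserves_lattice
    {Λ : Type*} [AddCommGroup Λ] {ρ : ℕ} (bΛ : Module.Basis (Fin ρ) ℤ Λ)
    {V : Type*} [AddCommGroup V] [Module ℂ V]
    (ι : Λ →+ V) (hinj : Function.Injective ι)
    (hspan : Submodule.span ℂ (Set.range ι) = ⊤)
    (T : V ≃ₗ[ℂ] V) (hT : IsOfFinOrder T)
    (hTΛ : (T : V → V) '' Set.range ι = Set.range ι) :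
    (∀ σ : AddAut Λ, (∀ x : Λ, ι (σ x) = T (ι x)) → orderOf T ∣ addOrderOf σ) ∧
      (ρ ≤ 6 → orderOf T ≤ 30) := by
  have key : ∀ (σ : AddAut Λ), (∀ x : Λ, ι (σ x) = T (ι x)) →
      ∀ (k : ℕ) (x : Λ), ι ((k • σ) x) = (T ^ k) (ι x) := by
    intro σ hσ k
    induction k with
    | zero => intro x; simp
    | succ k ih =>
      intro x
      rw [succ_nsmul, pow_succ, AddAut.add_apply, ih (σ x), hσ]
      rfl
  have part1 : ∀ σ : AddAut Λ, (∀ x : Λ, ι (σ x) = T (ι x)) → orderOf T ∣ addOrderOf σ := by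
    intro σ hσ
    apply orderOf_dvd_of_pow_eq_one
    apply LinearEquiv.toLinearMap_injective
    apply LinearMap.ext_on hspan
    rintro v ⟨x, rfl⟩
    have h1 := key σ hσ (addOrderOf σ) x
    rw [addOrderOf_nsmul_eq_zero] at h1
    simpa using h1.symm
  refine ⟨part1, fun hρ => ?_⟩
  -- construct the induced automorphism of Λ
  have h1 : ∀ x : Λ, ∃ y, ι y = T (ι x) := by
    intro x
    have hx : T (ι x) ∈ Set.range ι := by
      rw [← hTΛ]; exact ⟨ι x, ⟨x, rfl⟩, rfl⟩
    exact hx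
  have h2 : ∀ x : Λ, ∃ y, ι y = T.symm (ι x) := by
    intro x
    have hx : ι x ∈ (T : V → V) '' Set.range ι := by rw [hTΛ]; exact ⟨x, rfl⟩
    obtain ⟨u, hu, huv⟩ := hx
    obtain ⟨y, rfl⟩ := hu
    exact ⟨y, by rw [← huv]; simp⟩
  choose f hf using h1
  choose g hg using h2
  have hgf : ∀ x, g (f x) = x := fun x => hinj (by rw [hg, hf]; simp)
  have hfg : ∀ x, f (g x) = x := fun x => hinj (by rw [hf, hg]; simp)
  have hadd : ∀ x y, f (x + y) = f x + f y := fun x y => hinj (by simp [hf, map_add])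
  let σ : AddAut Λ := AddEquiv.mk' ⟨f, g, hgf, hfg⟩ hadd
  have hσ : ∀ x, ι (σ x) = T (ι x) := hf
  have hTord : 0 < orderOf T := hT.orderOf_pos
  have hσfin : orderOf T • σ = 0 := by
    ext x
    apply hinj
    have h1 := key σ hσ (orderOf T) x
    rw [pow_orderOf_eq_one] at h1
    simpa using h1
  have hσof : IsOfFinAddOrder σ := isOfFinAddOrder_iff_nsmul_eq_zero.2 ⟨orderOf T, hTord, hσfin⟩
  -- transfer to an integer matrix, then to a rational matrix
  let Lσ : Λ →ₗ[ℤ] Λ := σ.toAddMonoidHom.toIntLinearMap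
  have hLσ : ∀ (k : ℕ) (x : Λ), (Lσ ^ k) x = (k • σ) x := by
    intro k
    induction k with
    | zero => intro x; rfl
    | succ k ih =>
      intro x
      rw [pow_succ, succ_nsmul, Module.End.mul_apply, AddAut.add_apply, ← ih (σ x)]
      rfl
  set M := LinearMap.toMatrixAlgEquiv bΛ Lσ with hM
  set A := ((Int.castRingHom ℚ).mapMatrix M : Matrix (Fin ρ) (Fin ρ) ℚ) with hA
  have hAiff : ∀ k : ℕ, A ^ k = 1 ↔ k • σ = 0 := by
    intro k
    have e1 : A ^ k = (Int.castRingHom ℚ).mapMatrix (M ^ k) := (map_pow _ _ _).symm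
    have e2 : M ^ k = LinearMap.toMatrixAlgEquiv bΛ (Lσ ^ k) := (map_pow _ _ _).symm
    constructor
    · intro h
      have hMk : M ^ k = 1 := by
        apply Matrix.map_injective (Int.cast_injective (α := ℚ))
        have : (Int.castRingHom ℚ).mapMatrix (M ^ k) = 1 := by rw [← e1, h]
        simpa [Matrix.map_one] using this
      have hLk : Lσ ^ k = 1 := by
        apply (LinearMap.toMatrixAlgEquiv bΛ).injective
        rw [← e2, hMk, map_one]
      ext x
      have := hLσ k x
      rw [hLk] at this
      simpa using this.symm
    · intro h
      have hLk : Lσ ^ k = 1 := by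
        ext x
        rw [hLσ k x, h]
        rfl
      rw [e1, e2, hLk, map_one, map_one]
  have hordeq : addOrderOf σ = orderOf A :=
    Nat.dvd_antisymm (addOrderOf_dvd_iff_nsmul_eq_zero.2 ((hAiff _).1 (pow_orderOf_eq_one A)))
      (orderOf_dvd_of_pow_eq_one ((hAiff _).2 (addOrderOf_nsmul_eq_zero σ)))
  have hAfin : IsOfFinOrder A :=
    isOfFinOrder_iff_pow_eq_one.2 ⟨orderOf T, hTord, (hAiff _).2 hσfin⟩
  calc orderOf T ≤ addOrderOf σ := Nat.le_of_dvd hσof.addOrderOf_pos (part1 σ hσ)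
    _ = orderOf A := hordeq
    _ ≤ 30 := matrix_order_le_30 hρ A hAfin
end
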